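/- Let F_m be the free group on x_1,…,x_m, with l(w) the reduced-word length of w, and let u_1,…,u_n ∈ {x_1,…,x_m}. Suppose t = (t_1,…,t_n) ∈ F_m^n is such that each t_k is conjugate to some generator x_{i_k} ∈ {x_1,…,x_m}, t_1 t_2 ⋯ t_n = u_1 u_2 ⋯ u_n, and l(t_1) + ⋯ + l(t_n) > n. Then there exist an index j with 1 ≤ j ≤ n-1 and ε ∈ {1, -1} such that the Hurwitz translate σ_j^ε · t satisfies l((σ_j^ε · t)_1) + ⋯ + l((σ_j^ε · t)_n) < l(t_1) + ⋯ + l(t_n). -/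

import Mathlib

/-- Defining relations of the braid group on `n` strands: the Artin generators are
`σ_0, …, σ_{n-2}` (`0`-based), indexed by `Fin (n-1)`. -/
def braidRels (n : ℕ) : Set (FreeGroup (Fin (n - 1))) :=
  {r | ∃ i j : Fin (n - 1),
    (((j : ℕ) = (i : ℕ) + 1) ∧
      r = FreeGroup.of i * FreeGroup.of j * FreeGroup.of i *
        (FreeGroup.of j * FreeGroup.of i * FreeGroup.of j)⁻¹) ∨
    (((i : ℕ) + 2 ≤ (j : ℕ)) ∧
      r = FreeGroup.of i * FreeGroup.of j * (FreeGroup.of j * FreeGroup.of i)⁻¹)}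

/-- The braid group on `n` strands, as a presented group. -/
abbrev BraidGroup (n : ℕ) := PresentedGroup (braidRels n)

/-- The Artin generator `σ_i` of the braid group (`0`-based index `i : Fin (n-1)`). -/
def braidGen {n : ℕ} (i : Fin (n - 1)) : BraidGroup n := PresentedGroup.of i

/-- The Artin generator `σ_k` for a natural number index `k` (`0`-based);
equal to `1` if `k` is out of range. -/
def braidGen' (n k : ℕ) : BraidGroup n :=
  if h : k < n - 1 then braidGen ⟨k, h⟩ else 1

/-- The Birman–Ko–Lee generator `a_{ij}` (`0`-based): for `i < j`,
`a_{ij} = σ_i σ_{i+1} ⋯ σ_{j-2} σ_{j-1} σ_{j-2}⁻¹ ⋯ σ_{i+1}⁻¹ σ_i⁻¹`. -/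
def bkl (n i j : ℕ) : BraidGroup n :=
  (((List.range (j - 1 - i)).map fun t => braidGen' n (i + t)).prod) *
    braidGen' n (j - 1) *
    (((List.range (j - 1 - i)).map fun t => braidGen' n (i + t)).prod)⁻¹

/-- The strand index `i` as an element of `Fin n` (from `i : Fin (n-1)`). -/
def finLo {n : ℕ} (i : Fin (n - 1)) : Fin n := ⟨i, by have := i.isLt; omega⟩

/-- The strand index `i+1` as an element of `Fin n` (from `i : Fin (n-1)`). -/
def finHi {n : ℕ} (i : Fin (n - 1)) : Fin n := ⟨(i : ℕ) + 1, by have := i.isLt; omega⟩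

/-- The Hurwitz move corresponding to the braid generator `σ_i`:
`σ_i · (g_1,…,g_n) = (g_1,…,g_{i-1}, g_{i+1}, g_{i+1}⁻¹ g_i g_{i+1}, g_{i+2},…,g_n)`. -/
def hurwitzMove {G : Type*} [Group G] {n : ℕ} (i : Fin (n - 1)) (g : Fin n → G) :
    Fin n → G := fun k =>
  if k = finLo i then g (finHi i)
  else if k = finHi i then (g (finHi i))⁻¹ * g (finLo i) * g (finHi i)
  else g k


set_option linter.unusedSectionVars false

namespace HurwitzAux

open FreeGroup

variable {α : Type*} [DecidableEq α]

/-- `Ok u v`: the adjacent letters `u` then `v` do not cancel. -/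
def Ok (u v : α × Bool) : Prop := ¬(u.1 = v.1 ∧ u.2 = !v.2)

/-- A word is reduced. -/
def IsRed (L : List (α × Bool)) : Prop := L.IsChain Ok

lemma isRed_reduce (L : List (α × Bool)) : IsRed (FreeGroup.reduce L) := by
  induction L with
  | nil => simp [IsRed]
  | cons a L ih =>
    rw [FreeGroup.reduce.cons]
    rcases h : FreeGroup.reduce L with _ | ⟨b, t⟩
    · simp [IsRed]
    · rw [h] at ih
      by_cases hc : a.1 = b.1 ∧ a.2 = !b.2
      · simpa [hc, IsRed] using ih.tail
      · simp only [if_neg hc]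
        exact List.isChain_cons_cons.mpr ⟨hc, ih⟩

lemma IsRed.reduce_eq {L : List (α × Bool)} (h : IsRed L) : FreeGroup.reduce L = L := by
  induction L with
  | nil => rfl
  | cons a L ih =>
    have hL : IsRed L := h.tail
    rw [FreeGroup.reduce.cons, ih hL]
    cases L with
    | nil => rfl
    | cons b t =>
      have hok : Ok a b := (List.isChain_cons_cons.mp h).1
      simp only [Ok] at hok
      simp [if_neg hok]

lemma isRed_toWord (x : FreeGroup α) : IsRed x.toWord := by
  rw [← FreeGroup.reduce_toWord]; exact isRed_reduce _

lemma IsRed.infix {L L' : List (α × Bool)} (h : IsRed L) (h' : L' <:+: L) : IsRed L' :=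
  List.IsChain.infix h h'

lemma toWord_mk_of_isRed {L : List (α × Bool)} (h : IsRed L) :
    (FreeGroup.mk L).toWord = L := by
  rw [FreeGroup.toWord_mk, h.reduce_eq]

lemma isRed_invRev {L : List (α × Bool)} (h : IsRed L) : IsRed (invRev L) := by
  have : FreeGroup.reduce (invRev L) = invRev L := by
    rw [FreeGroup.reduce_invRev, h.reduce_eq]
  rw [← this]; exact isRed_reduce _

lemma mk_singleton_true (a : α) : FreeGroup.mk [(a, true)] = FreeGroup.of a := rfl

lemma invRev_singleton (u : α × Bool) : invRev [u] = [(u.1, !u.2)] := by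
  simp [invRev]

lemma mk_singleton_false (a : α) : FreeGroup.mk [(a, false)] = (FreeGroup.of a)⁻¹ := by
  rw [← mk_singleton_true, FreeGroup.inv_mk, invRev_singleton]
  rfl

lemma toWord_length_mk_le (L : List (α × Bool)) :
    (FreeGroup.mk L).toWord.length ≤ L.length :=
  FreeGroup.norm_mk_le

lemma mk_flatten (Ls : List (List (α × Bool))) :
    FreeGroup.mk Ls.flatten = (Ls.map FreeGroup.mk).prod := by
  induction Ls with
  | nil => simp [FreeGroup.one_eq_mk]
  | cons A Ls ih => simp [← FreeGroup.mul_mk, ih]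

lemma prod_of_toWord (as : List α) :
    ((as.map (FreeGroup.of (α := α))).prod).toWord = as.map (fun a => (a, true)) := by
  have h1 : (as.map (FreeGroup.of (α := α))).prod = FreeGroup.mk (as.map (fun a => (a, true))) := by
    induction as with
    | nil => simp [FreeGroup.one_eq_mk]
    | cons a as ih => simp [ih, ← mk_singleton_true, FreeGroup.mul_mk]
  rw [h1]
  apply toWord_mk_of_isRed
  clear h1
  induction as with
  | nil => simp [IsRed]
  | cons a as ih =>
    cases as with
    | nil => simp [IsRed]
    | cons b bs =>
      refine List.isChain_cons_cons.mpr ⟨?_, ih⟩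
      simp [Ok]

/-- Structure of a conjugate of a generator. -/
lemma conj_word_aux (s : α) : ∀ (N : ℕ) (c : FreeGroup α), c.toWord.length ≤ N →
    ∃ P : List (α × Bool),
      (c * FreeGroup.of s * c⁻¹).toWord = P ++ (s, true) :: invRev P := by
  intro N
  induction N with
  | zero =>
    intro c hc
    have : c = 1 := by
      rw [← FreeGroup.toWord_eq_nil_iff, List.length_eq_zero_iff.symm]; omega
    refine ⟨[], ?_⟩
    simp [this, FreeGroup.invRev_empty, FreeGroup.toWord_of]
  | succ N ih =>
    intro c hc
    by_cases hnil : c.toWord = []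
    · have : c = 1 := FreeGroup.toWord_eq_nil_iff.mp hnil
      refine ⟨[], ?_⟩
      simp [this, FreeGroup.invRev_empty, FreeGroup.toWord_of]
    · set L := c.toWord with hLdef
      set u := L.getLast hnil with hu
      have hsplit : L.dropLast ++ [u] = L := List.dropLast_append_getLast hnil
      have hcL : c = FreeGroup.mk L := (FreeGroup.mk_toWord).symm
      by_cases hs : u.1 = s
      · -- last letter is ±s : absorb it
        have hc' : c = FreeGroup.mk L.dropLast * FreeGroup.mk [u] := by
          rw [FreeGroup.mul_mk, hsplit, hcL]
        have habs : FreeGroup.mk [u] * FreeGroup.of s * (FreeGroup.mk [u])⁻¹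
            = FreeGroup.of s := by
          rcases u with ⟨a, b⟩
          simp only at hs
          subst hs
          cases b
          · rw [mk_singleton_false]; group
          · rw [mk_singleton_true]; group
        have key : c * FreeGroup.of s * c⁻¹ =
            FreeGroup.mk L.dropLast * FreeGroup.of s * (FreeGroup.mk L.dropLast)⁻¹ := by
          rw [hc', mul_inv_rev]
          rw [show FreeGroup.mk L.dropLast * FreeGroup.mk [u] * FreeGroup.of s *
              ((FreeGroup.mk [u])⁻¹ * (FreeGroup.mk L.dropLast)⁻¹) =
              FreeGroup.mk L.dropLast * (FreeGroup.mk [u] * FreeGroup.of s *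
              (FreeGroup.mk [u])⁻¹) * (FreeGroup.mk L.dropLast)⁻¹ by group, habs]
        rw [key]
        apply ih
        calc (FreeGroup.mk L.dropLast).toWord.length ≤ L.dropLast.length :=
              toWord_length_mk_le _
        _ ≤ N := by
              have h1 : 1 ≤ L.length := List.length_pos_iff.mpr hnil
              have h2 : L.length ≤ N + 1 := hc
              simp only [List.length_dropLast]; omega
      · -- last letter is not ±s : the word is already reduced
        refine ⟨L, ?_⟩
        have h1 : c * FreeGroup.of s * c⁻¹ = FreeGroup.mk (L ++ (s, true) :: invRev L) := by
          rw [hcL, FreeGroup.inv_mk, ← mk_singleton_true, FreeGroup.mul_mk, FreeGroup.mul_mk]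
          congr 1
          simp
        rw [h1]
        apply toWord_mk_of_isRed
        have hLred : IsRed L := isRed_toWord c
        have hinv : IsRed (invRev L) := isRed_invRev hLred
        apply List.isChain_append.mpr
        refine ⟨hLred, ?_, ?_⟩
        · -- Chain' of (s,true) :: invRev L
          apply List.isChain_cons.mpr
          refine ⟨?_, hinv⟩
          intro v hv
          have hvv : v = (u.1, !u.2) := by
            have hh : (invRev L).head? = some (u.1, !u.2) := by
              rw [FreeGroup.invRev, List.head?_reverse, List.getLast?_map,
                List.getLast?_eq_getLast hnil, ← hu]
              rfl
            rw [hh] at hv; exact (Option.some_inj.mp hv).symm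
          subst hvv
          simp only [Ok]
          rintro ⟨h1, _⟩
          exact hs h1.symm
        · intro a ha v hv
          have hva : a = u := by
            rw [List.getLast?_eq_getLast hnil, ← hu] at ha
            exact (by simpa using ha : u = a).symm
          have hvv : v = (s, true) := by
            simp at hv; exact hv.symm
          subst hva hvv
          simp only [Ok]
          rintro ⟨h1, _⟩
          exact hs h1



/-! ### descent length lemmas -/

lemma mk_conj (P : List (α × Bool)) (x : α) :
    FreeGroup.mk (P ++ (x, true) :: invRev P) =
      FreeGroup.mk P * FreeGroup.of x * (FreeGroup.mk P)⁻¹ := by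
  rw [FreeGroup.inv_mk, ← mk_singleton_true, FreeGroup.mul_mk, FreeGroup.mul_mk]
  congr 1
  simp

lemma descent_sigma {a b : FreeGroup α} {P Q R : List (α × Bool)} {xa y : α}
    (ha : a.toWord = P ++ (xa, true) :: invRev P)
    (hb : b.toWord = Q ++ (y, true) :: invRev Q)
    (hP : P = Q ++ (y, true) :: R) :
    (b⁻¹ * a * b).toWord.length < a.toWord.length := by
  have haw : a = FreeGroup.mk P * FreeGroup.of xa * (FreeGroup.mk P)⁻¹ := by
    rw [← FreeGroup.mk_toWord (x := a), ha, mk_conj]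
  have hbw : b = FreeGroup.mk Q * FreeGroup.of y * (FreeGroup.mk Q)⁻¹ := by
    rw [← FreeGroup.mk_toWord (x := b), hb, mk_conj]
  have hmkP : FreeGroup.mk P = FreeGroup.mk Q * FreeGroup.of y * FreeGroup.mk R := by
    rw [hP, ← mk_singleton_true, FreeGroup.mul_mk, FreeGroup.mul_mk]
    congr 1
    simp
  have key : b⁻¹ * a * b =
      FreeGroup.mk ((Q ++ R) ++ (xa, true) :: invRev (Q ++ R)) := by
    rw [mk_conj, haw, hbw, hmkP, ← FreeGroup.mul_mk]
    group
  rw [key, ha]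
  have h1 : (FreeGroup.mk ((Q ++ R) ++ (xa, true) :: invRev (Q ++ R))).toWord.length
      ≤ ((Q ++ R) ++ (xa, true) :: invRev (Q ++ R)).length := FreeGroup.norm_mk_le
  have h2 : ((Q ++ R) ++ (xa, true) :: invRev (Q ++ R)).length
      = 2 * (Q.length + R.length) + 1 := by
    simp [List.length_append, FreeGroup.invRev_length]; ring
  have h3 : (P ++ (xa, true) :: invRev P).length = 2 * P.length + 1 := by
    simp [List.length_append, FreeGroup.invRev_length]; ring
  have h4 : P.length = Q.length + 1 + R.length := by simp [hP]; omega
  omega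

lemma descent_sigma_inv {a b : FreeGroup α} {P Q S : List (α × Bool)} {xa y : α}
    (ha : a.toWord = P ++ (xa, true) :: invRev P)
    (hb : b.toWord = Q ++ (y, true) :: invRev Q)
    (hQ : Q = P ++ (xa, false) :: S) :
    (a * b * a⁻¹).toWord.length < b.toWord.length := by
  have haw : a = FreeGroup.mk P * FreeGroup.of xa * (FreeGroup.mk P)⁻¹ := by
    rw [← FreeGroup.mk_toWord (x := a), ha, mk_conj]
  have hbw : b = FreeGroup.mk Q * FreeGroup.of y * (FreeGroup.mk Q)⁻¹ := by
    rw [← FreeGroup.mk_toWord (x := b), hb, mk_conj]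
  have hmkQ : FreeGroup.mk Q = FreeGroup.mk P * (FreeGroup.of xa)⁻¹ * FreeGroup.mk S := by
    rw [hQ, ← FreeGroup.mul_mk, ← List.singleton_append, ← FreeGroup.mul_mk,
      mk_singleton_false, mul_assoc]
  have key : a * b * a⁻¹ =
      FreeGroup.mk ((P ++ S) ++ (y, true) :: invRev (P ++ S)) := by
    rw [mk_conj, haw, hbw, hmkQ, ← FreeGroup.mul_mk]
    group
  rw [key, hb]
  have h1 : (FreeGroup.mk ((P ++ S) ++ (y, true) :: invRev (P ++ S))).toWord.length
      ≤ ((P ++ S) ++ (y, true) :: invRev (P ++ S)).length := FreeGroup.norm_mk_le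
  have h2 : ((P ++ S) ++ (y, true) :: invRev (P ++ S)).length
      = 2 * (P.length + S.length) + 1 := by
    simp [List.length_append, FreeGroup.invRev_length]; ring
  have h3 : (Q ++ (y, true) :: invRev Q).length = 2 * Q.length + 1 := by
    simp [List.length_append, FreeGroup.invRev_length]; ring
  have h4 : Q.length = P.length + 1 + S.length := by simp [hQ]; omega
  omega

/-! ### word-combinatorics helpers -/

lemma sum_map_range (f : ℕ → ℕ) (n : ℕ) :
    ((List.range n).map f).sum = ∑ k ∈ Finset.range n, f k := by
  induction n with
  | zero => simp
  | succ n ih => rw [List.range_succ, Finset.sum_range_succ, List.map_append, List.sum_append, ih]; simp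

lemma getElem_invRev (L : List (α × Bool)) {i : ℕ} (hi : i < (invRev L).length)
    (hi' : L.length - 1 - i < L.length) :
    (invRev L)[i] = ((L[L.length - 1 - i]'hi').1, !(L[L.length - 1 - i]'hi').2) := by
  simp [FreeGroup.invRev, List.getElem_reverse, List.getElem_map]

/-- The residual segment of the `k`-th block, after `l k` letters have been consumed from
the left and `r k` from the right. -/
def seg (P : ℕ → List (α × Bool)) (x : ℕ → α) (l r : ℕ → ℕ) (k : ℕ) : List (α × Bool) :=
  (P k).drop (l k) ++ (x k, true) :: (invRev (P k)).take ((P k).length - r k)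

/-- The full word of the `k`-th block. -/
def blockW (P : ℕ → List (α × Bool)) (x : ℕ → α) (k : ℕ) : List (α × Bool) :=
  P k ++ (x k, true) :: invRev (P k)

/-- There is a length-decreasing Hurwitz move at some junction `(j, j+1)`. -/
def Desc (P : ℕ → List (α × Bool)) (x : ℕ → α) (n : ℕ) : Prop :=
  ∃ j, j + 1 < n ∧
    ((∃ R, P j = P (j+1) ++ (x (j+1), true) :: R) ∨
     (∃ S, P (j+1) = P j ++ (x j, false) :: S))

lemma seg_ne_nil (P : ℕ → List (α × Bool)) (x : ℕ → α) (l r : ℕ → ℕ) (k : ℕ) :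
    seg P x l r k ≠ [] := by
  simp [seg]

lemma length_take_invRev (L : List (α × Bool)) (m : ℕ) (h : m ≤ L.length) :
    ((invRev L).take m).length = m := by
  simp [FreeGroup.invRev_length]
  omega

lemma seg_length (P : ℕ → List (α × Bool)) (x : ℕ → α) (l r : ℕ → ℕ) (k : ℕ) :
    (seg P x l r k).length = ((P k).length - l k) + 1 + ((P k).length - r k) := by
  simp [seg, List.length_append, List.length_drop, List.length_take, FreeGroup.invRev_length]
  omega

lemma seg_isRed (P : ℕ → List (α × Bool)) (x : ℕ → α) (l r : ℕ → ℕ) (k : ℕ)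
    (hW : IsRed (blockW P x k)) : IsRed (seg P x l r k) := by
  apply hW.infix
  refine ⟨(P k).take (l k), (invRev (P k)).drop ((P k).length - r k), ?_⟩
  rw [blockW, seg]
  simp only [List.append_assoc, List.cons_append]
  rw [List.take_append_drop, ← List.append_assoc, List.take_append_drop]

lemma seg_getLast?_center (P : ℕ → List (α × Bool)) (x : ℕ → α) (l r : ℕ → ℕ) (k : ℕ)
    (h : r k = (P k).length) :
    (seg P x l r k).getLast? = some (x k, true) := by
  rw [seg, h, Nat.sub_self, List.take_zero, List.getLast?_append_cons]
  rfl

lemma seg_getLast?_side (P : ℕ → List (α × Bool)) (x : ℕ → α) (l r : ℕ → ℕ) (k : ℕ)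
    (h : r k < (P k).length) :
    (seg P x l r k).getLast? =
      some (((P k)[r k]'h).1, !((P k)[r k]'h).2) := by
  have hlen : ((invRev (P k)).take ((P k).length - r k)).length = (P k).length - r k :=
    length_take_invRev _ _ (by omega)
  have hne : (invRev (P k)).take ((P k).length - r k) ≠ [] := by
    apply List.ne_nil_of_length_pos
    omega
  rw [seg, List.getLast?_append_cons,
    show ((x k, true) :: (invRev (P k)).take ((P k).length - r k))
      = [(x k, true)] ++ (invRev (P k)).take ((P k).length - r k) from rfl,
    List.getLast?_append_of_ne_nil _ hne, List.getLast?_eq_getElem?, hlen,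
    List.getElem?_eq_getElem (by simp [List.length_take, FreeGroup.invRev_length]; omega)]
  congr 1
  have hi1 : (P k).length - r k - 1 < (FreeGroup.invRev (P k)).length := by
    simp [FreeGroup.invRev_length]; omega
  have hi2 : (P k).length - 1 - ((P k).length - r k - 1) < (P k).length := by omega
  have hrw := getElem_invRev (L := P k) hi1 hi2
  rw [List.getElem_take, hrw]
  have hidx : (P k).length - 1 - ((P k).length - r k - 1) = r k := by omega
  simp only [hidx]

lemma seg_head?_center (P : ℕ → List (α × Bool)) (x : ℕ → α) (l r : ℕ → ℕ) (k : ℕ)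
    (h : l k = (P k).length) :
    (seg P x l r k).head? = some (x k, true) := by
  rw [seg, h, List.drop_length]
  rfl

lemma seg_head?_side (P : ℕ → List (α × Bool)) (x : ℕ → α) (l r : ℕ → ℕ) (k : ℕ)
    (h : l k < (P k).length) :
    (seg P x l r k).head? = some ((P k)[l k]'h) := by
  have hne : (P k).drop (l k) ≠ [] := by
    apply List.ne_nil_of_length_pos
    simp [List.length_drop]
    omega
  rw [seg, List.head?_append_of_ne_nil _ hne, List.head?_drop,
    List.getElem?_eq_getElem h]

lemma mk_flatten_move {n j : ℕ} (hj : j + 1 < n) (g g' : ℕ → List (α × Bool))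
    (hlo : ∀ k, k < j → g k = g' k) (hhi : ∀ k, j + 2 ≤ k → g k = g' k)
    (hmid : FreeGroup.mk (g j) * FreeGroup.mk (g (j+1))
          = FreeGroup.mk (g' j) * FreeGroup.mk (g' (j+1))) :
    FreeGroup.mk (((List.range n).map g).flatten)
      = FreeGroup.mk (((List.range n).map g').flatten) := by
  have hsplit : List.range n = (List.range j ++ [j]) ++
      ([j+1] ++ (List.range (n - (j+2))).map (fun i => (j+2) + i)) := by
    have h1 : n = (j + 2) + (n - (j+2)) := by omega
    calc List.range n = List.range ((j+2) + (n - (j+2))) := by rw [← h1]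
    _ = List.range (j+2) ++ (List.range (n - (j+2))).map (fun i => (j+2) + i) :=
        List.range_add
    _ = _ := by
        rw [show j + 2 = (j+1) + 1 from rfl, List.range_succ, List.range_succ]
        simp [List.append_assoc]
  rw [mk_flatten, mk_flatten, List.map_map, List.map_map, hsplit]
  simp only [List.map_append, List.prod_append, List.map_cons, List.map_nil,
    List.prod_cons, List.prod_nil, Function.comp_apply]
  have hA : (List.range j).map (FreeGroup.mk ∘ g) = (List.range j).map (FreeGroup.mk ∘ g') := by
    apply List.map_congr_left
    intro k hk
    simp [Function.comp, hlo k (List.mem_range.mp hk)]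
  have hB : (List.map (fun i => (j+2) + i) (List.range (n - (j+2)))).map (FreeGroup.mk ∘ g)
      = (List.map (fun i => (j+2) + i) (List.range (n - (j+2)))).map (FreeGroup.mk ∘ g') := by
    apply List.map_congr_left
    intro k hk
    obtain ⟨i, _, rfl⟩ := List.mem_map.mp hk
    simp [Function.comp, hhi ((j+2)+i) (by omega)]
  rw [hA, hB]
  simp only [mul_one, mul_assoc]
  congr 1
  rw [← mul_assoc, ← mul_assoc, hmid]


theorem main (n : ℕ) (hn : 1 ≤ n) (P : ℕ → List (α × Bool)) (x : ℕ → α)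
    (U : FreeGroup α) (hU : U.toWord.length = n)
    (hW : ∀ k, k < n → IsRed (blockW P x k)) :
    ∀ (N : ℕ) (l r : ℕ → ℕ),
      (∑ k ∈ Finset.range n, (((P k).length - l k) + ((P k).length - r k))) ≤ N →
      (∀ k, k < n → l k ≤ (P k).length ∧ r k ≤ (P k).length) →
      l 0 = 0 →
      (∀ j, j + 1 < n → r j = l (j+1)) →
      (∀ j, j + 1 < n → (P (j+1)).take (l (j+1)) = (P j).take (l (j+1))) →
      FreeGroup.mk (((List.range n).map (seg P x l r)).flatten) = U →
      Desc P x n ∨ (∀ k, k < n → P k = []) := by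
  intro N
  induction N using Nat.strong_induction_on with
  | _ N ih =>
  intro l r hm hbnd hl0 hrl htake hmk
  by_cases hbad : ∃ j, j + 1 < n ∧
      ¬ (∀ u ∈ (seg P x l r j).getLast?, ∀ v ∈ (seg P x l r (j+1)).head?, Ok u v)
  · obtain ⟨j, hj, hS⟩ := hbad
    push_neg at hS
    obtain ⟨u, hu, v, hv, huv⟩ := hS
    rw [Ok, not_not] at huv
    have hjn : j < n := by omega
    obtain ⟨hlj, hrj⟩ := hbnd j hjn
    obtain ⟨hlb, hrb⟩ := hbnd (j+1) hj
    have hrlj : r j = l (j+1) := hrl j hj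
    rcases eq_or_lt_of_le hrj with hr | hr
    · -- the last letter of segment j is its center
      have hu' : u = (x j, true) := by
        have h := seg_getLast?_center P x l r j hr
        rw [h] at hu
        exact (by simpa using hu : (x j, true) = u).symm
      rcases eq_or_lt_of_le hlb with hl | hl
      · -- both letters are centers : impossible
        have hv' : v = (x (j+1), true) := by
          have h := seg_head?_center P x l r (j+1) hl
          rw [h] at hv
          exact (by simpa using hv : (x (j+1), true) = v).symm
        rw [hu', hv'] at huv
        simp at huv
      · -- descent of type σ⁻¹
        have hv' : v = (P (j+1))[l (j+1)]'hl := by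
          have h := seg_head?_side P x l r (j+1) hl
          rw [h] at hv
          exact (by simpa using hv : (P (j+1))[l (j+1)]'hl = v).symm
        left
        refine ⟨j, hj, Or.inr ⟨(P (j+1)).drop (l (j+1) + 1), ?_⟩⟩
        have e0 : l (j+1) = (P j).length := by omega
        have e1 : (P (j+1)).take (l (j+1)) = P j := by
          rw [htake j hj, e0, List.take_length]
        have e2 : (P (j+1))[l (j+1)]'hl = (x j, false) := by
          rw [← hv']
          obtain ⟨h1, h2⟩ := huv
          rw [hu'] at h1 h2
          simp only at h1 h2
          rcases v with ⟨v1, v2⟩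
          simp only at h1 h2
          cases v2
          · rw [← h1]
          · simp at h2
        conv_lhs => rw [← List.take_append_drop (l (j+1)) (P (j+1))]
        rw [e1, List.drop_eq_getElem_cons hl, e2]
    · rcases eq_or_lt_of_le hlb with hl | hl
      · -- descent of type σ
        have hu' : u = (((P j)[r j]'hr).1, !((P j)[r j]'hr).2) := by
          have h := seg_getLast?_side P x l r j hr
          rw [h] at hu
          exact (by simpa using hu :
            (((P j)[r j]'hr).1, !((P j)[r j]'hr).2) = u).symm
        have hv' : v = (x (j+1), true) := by
          have h := seg_head?_center P x l r (j+1) hl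
          rw [h] at hv
          exact (by simpa using hv : (x (j+1), true) = v).symm
        left
        refine ⟨j, hj, Or.inl ⟨(P j).drop (r j + 1), ?_⟩⟩
        have e1 : (P j).take (r j) = P (j+1) := by
          rw [hrlj, ← htake j hj, hl, List.take_length]
        have e2 : (P j)[r j]'hr = (x (j+1), true) := by
          obtain ⟨h1, h2⟩ := huv
          rw [hu', hv'] at h1 h2
          simp only at h1 h2
          rw [Prod.ext_iff]
          refine ⟨h1, ?_⟩
          have h3 := congrArg Bool.not h2
          simpa using h3
        conv_lhs => rw [← List.take_append_drop (r j) (P j)]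
        rw [e1, List.drop_eq_getElem_cons hr, e2]
      · -- interior cancellation : perform the Hurwitz-word move and recurse
        have hu' : u = (((P j)[r j]'hr).1, !((P j)[r j]'hr).2) := by
          have h := seg_getLast?_side P x l r j hr
          rw [h] at hu
          exact (by simpa using hu :
            (((P j)[r j]'hr).1, !((P j)[r j]'hr).2) = u).symm
        have hv' : v = (P (j+1))[l (j+1)]'hl := by
          have h := seg_head?_side P x l r (j+1) hl
          rw [h] at hv
          exact (by simpa using hv : (P (j+1))[l (j+1)]'hl = v).symm
        have hletter : (P (j+1))[l (j+1)]'hl = (P j)[r j]'hr := by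
          rw [← hv']
          obtain ⟨h1, h2⟩ := huv
          rw [hu'] at h1 h2
          simp only at h1 h2
          have h2' : ((P j)[r j]'hr).2 = v.2 := by
            have h3 := congrArg Bool.not h2
            simpa using h3
          exact Prod.ext_iff.mpr ⟨h1.symm, h2'.symm⟩
        set l' := Function.update l (j+1) (l (j+1) + 1) with hl'def
        set r' := Function.update r j (r j + 1) with hr'def
        have hl'j1 : l' (j+1) = l (j+1) + 1 := Function.update_self _ _ _
        have hr'j : r' j = r j + 1 := Function.update_self _ _ _
        have hl'other : ∀ k, k ≠ j + 1 → l' k = l k := fun k hk =>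
          Function.update_of_ne hk _ _
        have hr'other : ∀ k, k ≠ j → r' k = r k := fun k hk =>
          Function.update_of_ne hk _ _
        have hmeas : (∑ k ∈ Finset.range n, (((P k).length - l' k) + ((P k).length - r' k)))
            < ∑ k ∈ Finset.range n, (((P k).length - l k) + ((P k).length - r k)) := by
          apply Finset.sum_lt_sum
          · intro k hk
            rcases eq_or_ne k (j+1) with rfl | hkb
            · rw [hl'j1, hr'other _ (by omega)]
              omega
            · rcases eq_or_ne k j with rfl | hkj
              · rw [hl'other _ (by omega), hr'j]
                omega
              · rw [hl'other _ hkb, hr'other _ hkj]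
          · refine ⟨j, Finset.mem_range.mpr hjn, ?_⟩
            rw [hl'other _ (by omega), hr'j]
            omega
        refine ih _ (lt_of_lt_of_le hmeas hm) l' r' le_rfl ?_ ?_ ?_ ?_ ?_
        · -- bounds
          intro k hk
          rcases eq_or_ne k (j+1) with rfl | hkb
          · rw [hl'j1, hr'other _ (by omega)]
            exact ⟨by omega, hrb⟩
          · rcases eq_or_ne k j with rfl | hkj
            · rw [hl'other _ (by omega), hr'j]
              exact ⟨hlj, by omega⟩
            · rw [hl'other _ hkb, hr'other _ hkj]
              exact hbnd k hk
        · rw [hl'other 0 (by omega)]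
          exact hl0
        · intro j' hj'
          rcases eq_or_ne j' j with heq | hjj
          · rw [heq, hr'j, hl'j1, hrlj]
          · rw [hr'other _ hjj, hl'other _ (by omega)]
            exact hrl j' hj'
        · intro j' hj'
          rcases eq_or_ne j' j with heq | hjj
          · rw [heq, hl'j1]
            have hlb' : l (j+1) < (P j).length := by omega
            rw [← List.take_concat_get hl, ← List.take_concat_get hlb']
            rw [htake j hj]
            congr 1
            have hlet := hletter
            simp only [hrlj] at hlet
            exact hlet
          · rw [hl'other _ (by omega)]
            exact htake j' hj'
        · rw [← hmk]
          apply mk_flatten_move hj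
          · intro k hk
            simp only [seg, hl'other _ (by omega : k ≠ j + 1), hr'other _ (by omega : k ≠ j)]
          · intro k hk
            simp only [seg, hl'other _ (by omega : k ≠ j + 1), hr'other _ (by omega : k ≠ j)]
          · -- the middle products agree
            have hIj : seg P x l r j = seg P x l' r' j ++ [u] := by
              simp only [seg, hl'other _ (by omega : j ≠ j + 1), hr'j]
              rw [show (P j).length - r j = ((P j).length - r j - 1) + 1 from by omega,
                ← List.take_concat_get
                  (by simp [FreeGroup.invRev_length]; omega :
                    (P j).length - r j - 1 < (invRev (P j)).length)]
              have hval : (invRev (P j))[(P j).length - r j - 1]'(by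
                  simp [FreeGroup.invRev_length]; omega) = u := by
                have hi2 : (P j).length - 1 - ((P j).length - r j - 1) < (P j).length := by
                  omega
                rw [getElem_invRev (L := P j) _ hi2, hu']
                have hidx : (P j).length - 1 - ((P j).length - r j - 1) = r j := by omega
                simp only [hidx]
              rw [hval]
              rw [show (P j).length - (r j + 1) = (P j).length - r j - 1 from by omega]
              simp [List.concat_eq_append, List.append_assoc]
            have hIb : seg P x l r (j+1) = v :: seg P x l' r' (j+1) := by
              simp only [seg, hl'j1, hr'other _ (by omega : j + 1 ≠ j)]
              rw [hv', ← List.cons_append, ← List.drop_eq_getElem_cons hl]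
            rw [hIj, hIb,
              show (v :: seg P x l' r' (j+1)) = [v] ++ seg P x l' r' (j+1) from rfl,
              ← FreeGroup.mul_mk, ← FreeGroup.mul_mk]
            have hcancel : FreeGroup.mk [u] * FreeGroup.mk [v] = 1 := by
              have huv2 : [u] = invRev [v] := by
                have hvw : v = (P j)[r j]'hr := by rw [hv']; exact hletter
                rw [invRev_singleton, hu', hvw]
              rw [huv2, ← FreeGroup.inv_mk, inv_mul_cancel]
            rw [mul_assoc, ← mul_assoc (FreeGroup.mk [u]), hcancel, one_mul]
  · -- no cancellation anywhere : the concatenation is reduced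
    push_neg at hbad
    have hflat : IsRed (((List.range n).map (seg P x l r)).flatten) := by
      rw [IsRed, List.isChain_flatten]
      · constructor
        · intro A hA
          obtain ⟨k, hk, rfl⟩ := List.mem_map.mp hA
          exact seg_isRed P x l r k (hW k (List.mem_range.mp hk))
        · rw [List.isChain_map]
          obtain ⟨n', rfl⟩ : ∃ n', n = n' + 1 := ⟨n - 1, by omega⟩
          exact (List.isChain_range_succ _ n').mpr fun m hm => hbad m (by omega)
      · intro hmem
        obtain ⟨k, hk, he⟩ := List.mem_map.mp hmem
        exact seg_ne_nil P x l r k he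
    have hUw : U.toWord = ((List.range n).map (seg P x l r)).flatten := by
      rw [← hmk, FreeGroup.toWord_mk, hflat.reduce_eq]
    have hsum : ∑ k ∈ Finset.range n, (seg P x l r k).length = n := by
      have hflatlen : (((List.range n).map (seg P x l r)).flatten).length = n := by
        rw [← hUw, hU]
      rw [List.length_flatten, List.map_map, sum_map_range] at hflatlen
      exact hflatlen
    have hsum2 : (∑ k ∈ Finset.range n,
        ((((P k).length - l k) + ((P k).length - r k)) + 1)) = n := by
      calc (∑ k ∈ Finset.range n, ((((P k).length - l k) + ((P k).length - r k)) + 1))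
          = ∑ k ∈ Finset.range n, (seg P x l r k).length := by
            apply Finset.sum_congr rfl
            intro k _
            rw [seg_length]
            ring
      _ = n := hsum
    rw [Finset.sum_add_distrib, Finset.sum_const, Finset.card_range, smul_eq_mul,
      mul_one] at hsum2
    have hzero : ∀ k ∈ Finset.range n, (((P k).length - l k) + ((P k).length - r k)) = 0 := by
      apply Finset.sum_eq_zero_iff.mp
      omega
    right
    have hPlen : ∀ k, k < n → (P k).length = 0 := by
      intro k
      induction k with
      | zero =>
        intro hk
        have h0 := hzero 0 (Finset.mem_range.mpr hk)
        omega
      | succ k ihk =>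
        intro hk
        have hk' : k < n := by omega
        have e2 : (P k).length = 0 := ihk hk'
        have h0 := hzero (k+1) (Finset.mem_range.mpr hk)
        have hb := hbnd (k+1) hk
        have hbk := hbnd k hk'
        have e1 : r k = l (k+1) := hrl k hk
        omega
    exact fun k hk => List.length_eq_zero_iff.mp (hPlen k hk)

lemma sum_update_lt {n : ℕ} (F : Fin n → ℕ) (i1 i2 : Fin n) (h12 : i1 ≠ i2) (A B : ℕ)
    (h : A + B < F i1 + F i2) :
    ∑ k, Function.update (Function.update F i1 A) i2 B k < ∑ k, F k := by
  rw [Finset.sum_update_of_mem (Finset.mem_univ i2),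
    Finset.sum_update_of_mem (by simp [h12] : i1 ∈ Finset.univ \ {i2})]
  have h2 : (∑ k, F k) = F i2 + ∑ k ∈ Finset.univ \ {i2}, F k := by
    rw [← Finset.erase_eq, ← Finset.add_sum_erase _ F (Finset.mem_univ i2)]
  have h3 : (∑ k ∈ Finset.univ \ {i2}, F k)
      = F i1 + ∑ k ∈ (Finset.univ \ {i2}) \ {i1}, F k := by
    rw [← Finset.add_sum_erase _ F (by simp [h12] : i1 ∈ Finset.univ \ {i2}),
      Finset.erase_eq]
  omega


lemma finLo_ne_finHi {n : ℕ} (i : Fin (n-1)) : finLo i ≠ finHi i := by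
  intro h
  have h2 := congrArg Fin.val h
  simp [finLo, finHi] at h2

lemma hurwitzMove_eq_update {G : Type*} [Group G] {n : ℕ} (i : Fin (n - 1)) (g : Fin n → G) :
    hurwitzMove i g = Function.update (Function.update g (finLo i) (g (finHi i))) (finHi i)
      ((g (finHi i))⁻¹ * g (finLo i) * g (finHi i)) := by
  funext k
  simp only [hurwitzMove]
  rcases eq_or_ne k (finHi i) with rfl | h1
  · rw [if_neg (Ne.symm (finLo_ne_finHi i)), if_pos rfl, Function.update_self]
  · rw [Function.update_of_ne h1]
    rcases eq_or_ne k (finLo i) with rfl | h2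
    · rw [if_pos rfl, Function.update_self]
    · rw [if_neg h2, if_neg h1, Function.update_of_ne h2]

lemma hurwitzMove_update_inv {G : Type*} [Group G] {n : ℕ} (i : Fin (n - 1)) (g : Fin n → G) :
    hurwitzMove i (Function.update (Function.update g (finLo i)
        (g (finLo i) * g (finHi i) * (g (finLo i))⁻¹)) (finHi i) (g (finLo i))) = g := by
  set t' := Function.update (Function.update g (finLo i)
      (g (finLo i) * g (finHi i) * (g (finLo i))⁻¹)) (finHi i) (g (finLo i)) with ht'
  have e1 : t' (finHi i) = g (finLo i) := Function.update_self _ _ _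
  have e2 : t' (finLo i) = g (finLo i) * g (finHi i) * (g (finLo i))⁻¹ := by
    rw [ht', Function.update_of_ne (finLo_ne_finHi i), Function.update_self]
  have e3 : ∀ k, k ≠ finLo i → k ≠ finHi i → t' k = g k := by
    intro k h2 h1
    rw [ht', Function.update_of_ne h1, Function.update_of_ne h2]
  funext k
  simp only [hurwitzMove]
  rcases eq_or_ne k (finLo i) with rfl | h2
  · rw [if_pos rfl, e1]
  · rcases eq_or_ne k (finHi i) with rfl | h1
    · rw [if_neg (Ne.symm (finLo_ne_finHi i)), if_pos rfl, e1, e2]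
      group
    · rw [if_neg h2, if_neg h1, e3 k h2 h1]

lemma sum_len_update_lt {n : ℕ} {α : Type*} [DecidableEq α]
    (t : Fin n → FreeGroup α) (i1 i2 : Fin n)
    (h12 : i1 ≠ i2) (a b : FreeGroup α)
    (hab : a.toWord.length + b.toWord.length
      < (t i1).toWord.length + (t i2).toWord.length) :
    ∑ k, ((Function.update (Function.update t i1 a) i2 b) k).toWord.length
      < ∑ k, (t k).toWord.length := by
  have h1 := Function.comp_update (fun z : FreeGroup α => z.toWord.length)
    (Function.update t i1 a) i2 b
  have h2 := Function.comp_update (fun z : FreeGroup α => z.toWord.length) t i1 a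
  have hcomp : (fun k => ((Function.update (Function.update t i1 a) i2 b) k).toWord.length)
      = Function.update (Function.update (fun k => (t k).toWord.length) i1 a.toWord.length) i2
          b.toWord.length := by
    calc (fun k => ((Function.update (Function.update t i1 a) i2 b) k).toWord.length)
        = (fun z : FreeGroup α => z.toWord.length)
            ∘ (Function.update (Function.update t i1 a) i2 b) := rfl
      _ = _ := by rw [h1, h2]; rfl
  rw [show (∑ k, ((Function.update (Function.update t i1 a) i2 b) k).toWord.length)
      = ∑ k, Function.update (Function.update (fun k => (t k).toWord.length) i1
          a.toWord.length) i2 b.toWord.length k from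
        Finset.sum_congr rfl fun k _ => congrFun hcomp k]
  exact sum_update_lt _ i1 i2 h12 _ _ hab

end HurwitzAux

/-- **Lemma (length decrease).** Let `u_1,…,u_n` be generators of the free group `F_m`
and let `t ∈ F_m^n` be a tuple, each entry conjugate to a generator, with
`t_1 ⋯ t_n = u_1 ⋯ u_n` and total reduced length `> n`.  Then for some index `j` and
some sign `ε ∈ {1, -1}`, the Hurwitz translate `σ_j^ε · t` (under the Hurwitz action
given by `ρ` with `ρ(σ_i) = hurwitzMove i`) has strictly smaller total reduced length. -/
theorem exists_length_decreasing_move {m n : ℕ} (hn : 1 ≤ n)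
    (u : Fin n → FreeGroup (Fin m)) (hu : ∀ k, ∃ s, u k = FreeGroup.of s)
    (t : Fin n → FreeGroup (Fin m))
    (ht : ∀ k, ∃ s : Fin m, IsConj (FreeGroup.of s) (t k))
    (hprod : (List.ofFn t).prod = (List.ofFn u).prod)
    (hlen : n < ∑ k, (t k).toWord.length)
    (ρ : BraidGroup n →* Equiv.Perm (Fin n → FreeGroup (Fin m)))
    (hρ : ∀ (i : Fin (n - 1)) (g : Fin n → FreeGroup (Fin m)),
      ρ (braidGen i) g = hurwitzMove i g) :
    ∃ (j : Fin (n - 1)) (ε : ℤ), (ε = 1 ∨ ε = -1) ∧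
      ∑ k, ((ρ (braidGen j ^ ε)) t k).toWord.length < ∑ k, (t k).toWord.length := by
  classical
  have hconj : ∀ k : Fin n, ∃ (s : Fin m) (Pw : List (Fin m × Bool)),
      (t k).toWord = Pw ++ (s, true) :: FreeGroup.invRev Pw := by
    intro k
    obtain ⟨s, hs⟩ := ht k
    obtain ⟨c, hc⟩ := isConj_iff.mp hs
    obtain ⟨Pw, hPw⟩ := HurwitzAux.conj_word_aux s c.toWord.length c le_rfl
    exact ⟨s, Pw, by rw [← hc]; exact hPw⟩
  choose sw Pw hPw using hconj
  obtain ⟨s0, -⟩ := ht ⟨0, hn⟩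
  set P' : ℕ → List (Fin m × Bool) := fun k => if h : k < n then Pw ⟨k, h⟩ else [] with hP'
  set x' : ℕ → Fin m := fun k => if h : k < n then sw ⟨k, h⟩ else s0 with hx'
  have hblock : ∀ k (h : k < n), HurwitzAux.blockW P' x' k = (t ⟨k, h⟩).toWord := by
    intro k h
    rw [HurwitzAux.blockW, hP', hx']
    simp only [dif_pos h]
    exact (hPw ⟨k, h⟩).symm
  have hWred : ∀ k, k < n → HurwitzAux.IsRed (HurwitzAux.blockW P' x' k) := by
    intro k h
    rw [hblock k h]
    exact HurwitzAux.isRed_toWord _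
  set U : FreeGroup (Fin m) := (List.ofFn u).prod with hUdef
  choose su hsu using hu
  have hUlen : U.toWord.length = n := by
    have hofn : U = ((List.ofFn su).map FreeGroup.of).prod := by
      rw [hUdef, List.map_ofFn]
      exact congrArg List.prod (congrArg List.ofFn (funext fun k => hsu k))
    rw [hofn, HurwitzAux.prod_of_toWord]
    simp
  have hseg0 : ∀ k, k < n → HurwitzAux.seg P' x' (fun _ => 0) (fun _ => 0) k
      = HurwitzAux.blockW P' x' k := by
    intro k _
    rw [HurwitzAux.seg, HurwitzAux.blockW]
    simp [List.take_of_length_le (le_of_eq (FreeGroup.invRev_length))]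
  have hinit : FreeGroup.mk (((List.range n).map
      (HurwitzAux.seg P' x' (fun _ => 0) (fun _ => 0))).flatten) = U := by
    rw [HurwitzAux.mk_flatten, List.map_map]
    have heq : (List.range n).map
        (FreeGroup.mk ∘ HurwitzAux.seg P' x' (fun _ => 0) (fun _ => 0)) = List.ofFn t := by
      apply List.ext_getElem
      · simp
      · intro i h1 h2
        have hi : i < n := by simpa using h1
        simp only [List.getElem_map, List.getElem_range, Function.comp_apply,
          List.getElem_ofFn]
        rw [hseg0 i hi, hblock i hi, FreeGroup.mk_toWord]
    rw [heq, hprod, hUdef]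
  have hmain := HurwitzAux.main n hn P' x' U hUlen hWred
      (∑ k ∈ Finset.range n, (((P' k).length - 0) + ((P' k).length - 0)))
      (fun _ => 0) (fun _ => 0) le_rfl
      (fun k _ => ⟨Nat.zero_le _, Nat.zero_le _⟩) rfl (fun j _ => rfl)
      (fun j _ => by simp) hinit
  have hlenk : ∀ (k : Fin n), (t k).toWord.length = 2 * (P' (k : ℕ)).length + 1 := by
    intro k
    have h := congrArg List.length (hblock (k : ℕ) k.isLt)
    simp [HurwitzAux.blockW, FreeGroup.invRev_length, Fin.eta] at h
    omega
  rcases hmain with ⟨j, hj, hcase⟩ | hallnil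
  · have hj1 : j < n - 1 := by omega
    have hjn : j < n := by omega
    refine ⟨⟨j, hj1⟩, ?_⟩
    have hta : (t (finLo ⟨j, hj1⟩)).toWord
        = P' j ++ (x' j, true) :: FreeGroup.invRev (P' j) := by
      have h := (hblock j hjn).symm
      rw [HurwitzAux.blockW] at h
      exact h
    have htb : (t (finHi ⟨j, hj1⟩)).toWord
        = P' (j+1) ++ (x' (j+1), true) :: FreeGroup.invRev (P' (j+1)) := by
      have h := (hblock (j+1) hj).symm
      rw [HurwitzAux.blockW] at h
      exact h
    rcases hcase with ⟨R, hR⟩ | ⟨S, hS⟩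
    · refine ⟨1, Or.inl rfl, ?_⟩
      have hdec := HurwitzAux.descent_sigma hta htb hR
      rw [zpow_one, hρ ⟨j, hj1⟩ t, HurwitzAux.hurwitzMove_eq_update]
      exact HurwitzAux.sum_len_update_lt t _ _ (HurwitzAux.finLo_ne_finHi _) _ _ (by omega)
    · refine ⟨-1, Or.inr rfl, ?_⟩
      have hdec := HurwitzAux.descent_sigma_inv hta htb hS
      rw [zpow_neg_one, map_inv]
      have hperm : (ρ (braidGen ⟨j, hj1⟩))⁻¹ t
          = Function.update (Function.update t (finLo ⟨j, hj1⟩)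
              (t (finLo ⟨j, hj1⟩) * t (finHi ⟨j, hj1⟩) * (t (finLo ⟨j, hj1⟩))⁻¹))
              (finHi ⟨j, hj1⟩) (t (finLo ⟨j, hj1⟩)) := by
        rw [Equiv.Perm.inv_def, Equiv.symm_apply_eq, hρ]
        exact (HurwitzAux.hurwitzMove_update_inv ⟨j, hj1⟩ t).symm
      rw [hperm]
      exact HurwitzAux.sum_len_update_lt t _ _ (HurwitzAux.finLo_ne_finHi _) _ _ (by omega)
  · exfalso
    have hone : ∀ k : Fin n, (t k).toWord.length = 1 := by
      intro k
      have h := hlenk k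
      rw [hallnil (k : ℕ) k.isLt] at h
      simpa using h
    rw [Finset.sum_congr rfl (fun k _ => hone k)] at hlen
    simp at hlen
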